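/- Assume: Ω and A are finite sets; u, v: A × Ω → [0,1]; μ̂ ∈ Δ(Ω) with min_{ω∈Ω} μ̂(ω) ≥ p0 > 0; there exists D > 0 such that for every action a ∈ A there is a belief η_a ∈ Δ(Ω) with Σ_ω η_a(ω) v(a,ω) ≥ Σ_ω η_a(ω) v(a',ω) + D for every a' ∈ A with a' ≠ a; and 0 < ε ≤ p0²D/2. Let π̂ be a direct signaling scheme that is persuasive for μ̂. Then there exists a direct signaling scheme π̃ such that (i) π̃ is persuasive for every prior μ ∈ Δ(Ω) with ‖μ − μ̂‖₁ ≤ ε, and (ii) U(μ̂, π̃) ≥ U(μ̂, π̂) − 6ε/(p0²D). -/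

import Mathlib

open Finset

/-- A direct signaling scheme: every row `π ω ·` is a probability distribution on actions. -/
def IsSignalScheme {Ω A : Type*} [Fintype A] (π : Ω → A → ℝ) : Prop :=
  (∀ ω a, 0 ≤ π ω a) ∧ ∀ ω, ∑ a, π ω a = 1

/-- A direct signaling scheme `π` is persuasive for prior `μ`: every recommended action
is a best response for the receiver with utility `v`. -/
def IsPersuasive {Ω A : Type*} [Fintype Ω] (v : A → Ω → ℝ) (μ : Ω → ℝ)
    (π : Ω → A → ℝ) : Prop :=
  ∀ a a' : A, 0 ≤ ∑ ω, μ ω * π ω a * (v a ω - v a' ω)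

/-- The designer's (obedient) expected utility. -/
def designerU {Ω A : Type*} [Fintype Ω] [Fintype A] (u : A → Ω → ℝ) (μ : Ω → ℝ)
    (π : Ω → A → ℝ) : ℝ :=
  ∑ ω, μ ω * ∑ a, π ω a * u a ω

set_option maxHeartbeats 1200000 in
/-- Robustification, first two claims of Lemma 1:
any signaling scheme persuasive for the estimate `μ̂` can be converted into a scheme
that is persuasive for all priors within `ℓ₁`-distance `ε` of `μ̂` and loses at most
`6ε/(p0²D)` of the designer's utility at `μ̂`. -/
theorem robustification
    {Ω A : Type*} [Fintype Ω] [Fintype A]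
    (u v : A → Ω → ℝ) (μhat : Ω → ℝ) (p0 D ε : ℝ) (πhat : Ω → A → ℝ)
    (hu : ∀ a ω, u a ω ∈ Set.Icc (0 : ℝ) 1)
    (hv : ∀ a ω, v a ω ∈ Set.Icc (0 : ℝ) 1)
    (hμ0 : ∀ ω, 0 ≤ μhat ω) (hμ1 : ∑ ω, μhat ω = 1)
    (hp0 : 0 < p0) (hmin : ∀ ω, p0 ≤ μhat ω)
    (hD : 0 < D)
    (hη : ∀ a : A, ∃ η : Ω → ℝ, (∀ ω, 0 ≤ η ω) ∧ (∑ ω, η ω = 1) ∧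
      ∀ a' : A, a' ≠ a → (∑ ω, η ω * v a' ω) + D ≤ ∑ ω, η ω * v a ω)
    (hε0 : 0 < ε) (hε : ε ≤ p0 ^ 2 * D / 2)
    (hπhat : IsSignalScheme πhat) (hpers : IsPersuasive v μhat πhat) :
    ∃ πt : Ω → A → ℝ, IsSignalScheme πt ∧
      (∀ μ : Ω → ℝ, (∀ ω, 0 ≤ μ ω) → (∑ ω, μ ω = 1) →
        (∑ ω, |μ ω - μhat ω|) ≤ ε → IsPersuasive v μ πt) ∧
      designerU u μhat πhat - 6 * ε / (p0 ^ 2 * D) ≤ designerU u μhat πt := by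
  classical
  -- nonemptiness
  have hΩne : Nonempty Ω := by
    by_contra h
    rw [not_nonempty_iff] at h
    rw [Finset.univ_eq_empty, Finset.sum_empty] at hμ1
    exact one_ne_zero hμ1.symm
  have hAne : Nonempty A := by
    by_contra h
    rw [not_nonempty_iff] at h
    obtain ⟨ω⟩ := hΩne
    have h2 := hπhat.2 ω
    rw [Finset.univ_eq_empty, Finset.sum_empty] at h2
    exact one_ne_zero h2.symm
  obtain ⟨ω₀⟩ := hΩne
  have hμle1 : ∀ ω, μhat ω ≤ 1 := by
    intro ω
    calc μhat ω ≤ ∑ ω', μhat ω' :=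
          Finset.single_le_sum (fun ω' _ => hμ0 ω') (mem_univ ω)
      _ = 1 := hμ1
  have hp0le1 : p0 ≤ 1 := le_trans (hmin ω₀) (hμle1 ω₀)
  have hμpos : ∀ ω, 0 < μhat ω := fun ω => lt_of_lt_of_le hp0 (hmin ω)
  -- choose the beliefs η
  choose η hη0 hη1 hηD using hη
  have hηle1 : ∀ a ω, η a ω ≤ 1 := by
    intro a ω
    calc η a ω ≤ ∑ ω', η a ω' :=
          Finset.single_le_sum (fun ω' _ => hη0 a ω') (mem_univ ω)
      _ = 1 := hη1 a
  have hmarg : ∀ a a', a' ≠ a → D ≤ ∑ ω, η a ω * (v a ω - v a' ω) := by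
    intro a a' h
    have h1 := hηD a a' h
    have e : ∑ ω, η a ω * (v a ω - v a' ω)
        = (∑ ω, η a ω * v a ω) - ∑ ω, η a ω * v a' ω := by
      rw [← Finset.sum_sub_distrib]
      exact Finset.sum_congr rfl fun ω _ => by ring
    rw [e]; linarith
  have hmarg0 : ∀ a a', 0 ≤ ∑ ω, η a ω * (v a ω - v a' ω) := by
    intro a a'
    by_cases h : a' = a
    · subst h; simp
    · linarith [hmarg a a' h]
  -- the residual vector is nonnegative
  have hρ : ∀ a ω, 0 ≤ μhat ω - p0 * η a ω := by
    intro a ω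
    have h1 : p0 * η a ω ≤ p0 * 1 := mul_le_mul_of_nonneg_left (hηle1 a ω) hp0.le
    have := hmin ω
    linarith
  -- best response to the residual
  have hrex : ∀ a : A, ∃ b : A, ∀ b' : A,
      (∑ ω, (μhat ω - p0 * η a ω) * v b' ω) ≤ ∑ ω, (μhat ω - p0 * η a ω) * v b ω := by
    intro a
    obtain ⟨b, -, hb⟩ := Finset.exists_max_image Finset.univ
      (fun b => ∑ ω, (μhat ω - p0 * η a ω) * v b ω) (Finset.univ_nonempty_iff.mpr hAne)
    exact ⟨b, fun b' => hb b' (mem_univ b')⟩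
  choose r hr using hrex
  have hρm : ∀ a a', 0 ≤ ∑ ω, (μhat ω - p0 * η a ω) * (v (r a) ω - v a' ω) := by
    intro a a'
    have e : ∑ ω, (μhat ω - p0 * η a ω) * (v (r a) ω - v a' ω)
        = (∑ ω, (μhat ω - p0 * η a ω) * v (r a) ω)
          - ∑ ω, (μhat ω - p0 * η a ω) * v a' ω := by
      rw [← Finset.sum_sub_distrib]
      exact Finset.sum_congr rfl fun ω _ => by ring
    rw [e]
    have := hr a a'
    linarith
  -- component schemes
  set πs : A → Ω → A → ℝ := fun a ω b =>
    (if b = a then p0 * η a ω / μhat ω else 0) +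
    (if b = r a then (μhat ω - p0 * η a ω) / μhat ω else 0) with hπsdef
  have hπs0 : ∀ a ω b, 0 ≤ πs a ω b := by
    intro a ω b
    apply add_nonneg <;> split_ifs <;>
      first
        | exact div_nonneg (mul_nonneg hp0.le (hη0 a ω)) (hμpos ω).le
        | exact div_nonneg (hρ a ω) (hμpos ω).le
        | exact le_refl 0
  have hπskey : ∀ a ω b, μhat ω * πs a ω b =
      (if b = a then p0 * η a ω else 0) +
      (if b = r a then μhat ω - p0 * η a ω else 0) := by
    intro a ω b
    have h := (hμpos ω).ne'
    simp only [hπsdef, mul_add, mul_ite, mul_zero]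
    rw [mul_div_cancel₀ _ h, mul_div_cancel₀ _ h]
  have hπsrow : ∀ a ω, ∑ b, πs a ω b = 1 := by
    intro a ω
    have h := (hμpos ω).ne'
    simp only [hπsdef]
    rw [Finset.sum_add_distrib, Finset.sum_ite_eq' Finset.univ a,
      Finset.sum_ite_eq' Finset.univ (r a)]
    simp only [mem_univ, if_true]
    field_simp
    ring
  -- margins of the component schemes
  have hM : ∀ a b a', (∑ ω, μhat ω * πs a ω b * (v b ω - v a' ω)) =
      (if b = a then p0 * ∑ ω, η a ω * (v b ω - v a' ω) else 0) +
      (if b = r a then ∑ ω, (μhat ω - p0 * η a ω) * (v b ω - v a' ω) else 0) := by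
    intro a b a'
    have e : ∀ ω, μhat ω * πs a ω b * (v b ω - v a' ω) =
        (if b = a then p0 * η a ω * (v b ω - v a' ω) else 0) +
        (if b = r a then (μhat ω - p0 * η a ω) * (v b ω - v a' ω) else 0) := by
      intro ω
      rw [hπskey a ω b]
      split_ifs <;> ring
    rw [Finset.sum_congr rfl fun ω _ => e ω, Finset.sum_add_distrib]
    congr 1
    · split_ifs with h
      · rw [Finset.mul_sum]
        exact Finset.sum_congr rfl fun ω _ => by ring
      · simp
    · split_ifs with h
      · rfl
      · simp
  have hM0 : ∀ a b a', 0 ≤ ∑ ω, μhat ω * πs a ω b * (v b ω - v a' ω) := by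
    intro a b a'
    rw [hM]
    apply add_nonneg
    · split_ifs with h
      · rw [h]
        exact mul_nonneg hp0.le (hmarg0 a a')
      · exact le_refl 0
    · split_ifs with h
      · rw [h]
        exact hρm a a'
      · exact le_refl 0
  have hMD : ∀ a a', a' ≠ a → p0 * D ≤ ∑ ω, μhat ω * πs a ω a * (v a ω - v a' ω) := by
    intro a a' h
    rw [hM]
    have h1 : p0 * D ≤ p0 * ∑ ω, η a ω * (v a ω - v a' ω) :=
      mul_le_mul_of_nonneg_left (hmarg a a' h) hp0.le
    have h2 : (0:ℝ) ≤ if a = r a then ∑ ω, (μhat ω - p0 * η a ω) * (v a ω - v a' ω) else 0 := by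
      split_ifs with h3
      · have h4 := hρm a a'
        rw [← h3] at h4
        exact h4
      · exact le_refl 0
    rw [if_pos rfl]
    linarith
  -- usage of the component schemes
  have hUse : ∀ a b, ∑ ω, μhat ω * πs a ω b =
      (if b = a then p0 else 0) + (if b = r a then 1 - p0 else 0) := by
    intro a b
    rw [Finset.sum_congr rfl fun ω _ => hπskey a ω b, Finset.sum_add_distrib]
    congr 1
    · rw [Finset.sum_ite_irrel]
      split_ifs with h
      · rw [← Finset.mul_sum, hη1 a, mul_one]
      · exact Finset.sum_const_zero
    · rw [Finset.sum_ite_irrel]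
      split_ifs with h
      · rw [Finset.sum_sub_distrib, hμ1, ← Finset.mul_sum, hη1 a, mul_one]
      · exact Finset.sum_const_zero
  -- usage of the given scheme
  set hh : A → ℝ := fun a => ∑ ω, μhat ω * πhat ω a with hhdef
  have hh0 : ∀ a, 0 ≤ hh a := fun a =>
    Finset.sum_nonneg fun ω _ => mul_nonneg (hμ0 ω) (hπhat.1 ω a)
  have hhsum : ∑ a, hh a = 1 := by
    simp only [hhdef]
    rw [Finset.sum_comm]
    calc ∑ ω, ∑ a, μhat ω * πhat ω a = ∑ ω, μhat ω * ∑ a, πhat ω a := by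
          exact Finset.sum_congr rfl fun ω _ => by rw [Finset.mul_sum]
      _ = 1 := by
          rw [Finset.sum_congr rfl fun ω _ => by rw [hπhat.2 ω, mul_one]]
          exact hμ1
  -- geometric weights
  set q : ℝ := (1 - p0) / (2 - p0) with hqdef
  have h2p : (0:ℝ) < 2 - p0 := by linarith
  have hq0 : 0 ≤ q := div_nonneg (by linarith) h2p.le
  have hq1 : q < 1 := (div_lt_one h2p).mpr (by linarith)
  have hq2 : q * (2 - p0) = 1 - p0 := by
    rw [hqdef, div_mul_cancel₀ _ h2p.ne']
  have hgeom : Summable fun k : ℕ => q ^ k := summable_geometric_of_lt_one hq0 hq1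
  have hsumf : ∀ b a : A, Summable fun k : ℕ =>
      q ^ k * (if r^[k] b = a then (1:ℝ) else 0) := by
    intro b a
    apply Summable.of_nonneg_of_le _ _ hgeom
    · intro k
      apply mul_nonneg (pow_nonneg hq0 k)
      split_ifs <;> norm_num
    · intro k
      have hle : (if r^[k] b = a then (1:ℝ) else 0) ≤ 1 := by split_ifs <;> norm_num
      calc q ^ k * (if r^[k] b = a then (1:ℝ) else 0) ≤ q ^ k * 1 :=
            mul_le_mul_of_nonneg_left hle (pow_nonneg hq0 k)
        _ = q ^ k := mul_one _
  set f : A → A → ℝ := fun b a => ∑' k : ℕ, q ^ k * (if r^[k] b = a then (1:ℝ) else 0)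
    with hfdef
  have hf0 : ∀ b a, 0 ≤ f b a := by
    intro b a
    apply tsum_nonneg
    intro k
    apply mul_nonneg (pow_nonneg hq0 k)
    split_ifs <;> norm_num
  have hfsum : ∀ b, ∑ a, f b a = 2 - p0 := by
    intro b
    simp only [hfdef]
    rw [← Summable.tsum_finsetSum fun a _ => hsumf b a]
    have e : ∀ k : ℕ, (∑ a, q ^ k * (if r^[k] b = a then (1:ℝ) else 0)) = q ^ k := by
      intro k
      rw [← Finset.mul_sum, Finset.sum_ite_eq Finset.univ (r^[k] b) (fun _ => (1:ℝ))]
      simp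
    rw [tsum_congr e, tsum_geometric_of_lt_one hq0 hq1, hqdef]
    rw [show (1:ℝ) - (1 - p0) / (2 - p0) = 1 / (2 - p0) by field_simp; ring]
    rw [one_div, inv_inv]
  have hfrec : ∀ b a, f b a = (if b = a then 1 else 0)
      + q * ∑ b' ∈ Finset.univ.filter (fun b' => r b' = a), f b b' := by
    intro b a
    have h1 : f b a = (if b = a then (1:ℝ) else 0)
        + ∑' k : ℕ, q ^ (k+1) * (if r^[k+1] b = a then (1:ℝ) else 0) := by
      simp only [hfdef]
      rw [Summable.tsum_eq_zero_add (hsumf b a)]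
      congr 1
      simp [Function.iterate_zero_apply]
      congr
    rw [h1]
    congr 1
    have h2 : ∀ k : ℕ, q ^ (k+1) * (if r^[k+1] b = a then (1:ℝ) else 0)
        = q * ∑ b' ∈ Finset.univ.filter (fun b' => r b' = a),
            q ^ k * (if r^[k] b = b' then (1:ℝ) else 0) := by
      intro k
      have h3 : ∑ b' ∈ Finset.univ.filter (fun b' => r b' = a),
          (if r^[k] b = b' then (1:ℝ) else 0)
          = if r^[k+1] b = a then (1:ℝ) else 0 := by
        rw [Finset.sum_ite_eq (Finset.univ.filter (fun b' => r b' = a)) (r^[k] b)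
          (fun _ => (1:ℝ))]
        rw [Function.iterate_succ_apply']
        simp [Finset.mem_filter]
      rw [Finset.mul_sum]
      rw [Finset.sum_congr rfl fun b' _ => by
        rw [show q * (q ^ k * (if r^[k] b = b' then (1:ℝ) else 0))
          = q ^ (k+1) * (if r^[k] b = b' then (1:ℝ) else 0) by ring]]
      rw [← Finset.mul_sum, h3]
    rw [tsum_congr h2, tsum_mul_left]
    congr 1
    rw [Summable.tsum_finsetSum fun b' _ => hsumf b b']
  -- the fixed-point weights
  set w : A → ℝ := fun a => (∑ b, hh b * f b a) / (2 - p0) with hwdef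
  have hw0 : ∀ a, 0 ≤ w a := fun a =>
    div_nonneg (Finset.sum_nonneg fun b _ => mul_nonneg (hh0 b) (hf0 b a)) h2p.le
  have hwsum : ∑ a, w a = 1 := by
    simp only [hwdef]
    rw [← Finset.sum_div, Finset.sum_comm]
    rw [Finset.sum_congr rfl fun b _ => by rw [← Finset.mul_sum, hfsum b]]
    rw [← Finset.sum_mul, hhsum, one_mul, div_self h2p.ne']
  set Rw : A → ℝ := fun a => ∑ b' ∈ Finset.univ.filter (fun b' => r b' = a), w b'
    with hRwdef
  have hRw0 : ∀ a, 0 ≤ Rw a := fun a => Finset.sum_nonneg fun b' _ => hw0 b'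
  have hwrec : ∀ a, w a = hh a / (2 - p0) + q * Rw a := by
    intro a
    have e1 : ∑ b, hh b * f b a
        = hh a + q * ∑ b' ∈ Finset.univ.filter (fun b' => r b' = a), ∑ b, hh b * f b b' := by
      rw [Finset.sum_congr rfl fun b _ => by rw [hfrec b a]]
      have e2 : ∀ b, hh b * ((if b = a then (1:ℝ) else 0)
          + q * ∑ b' ∈ Finset.univ.filter (fun b' => r b' = a), f b b')
          = (if b = a then hh b else 0)
            + q * ∑ b' ∈ Finset.univ.filter (fun b' => r b' = a), hh b * f b b' := by
        intro b
        rw [mul_add, mul_ite, mul_one, mul_zero]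
        congr 1
        rw [← mul_assoc, mul_comm (hh b) q, mul_assoc, Finset.mul_sum]
      rw [Finset.sum_congr rfl fun b _ => e2 b, Finset.sum_add_distrib,
        Finset.sum_ite_eq' Finset.univ a hh]
      simp only [mem_univ, if_true]
      congr 1
      rw [← Finset.mul_sum, Finset.sum_comm]
    simp only [hwdef, hRwdef, e1]
    rw [add_div, add_right_inj]
    rw [mul_div_assoc, Finset.sum_div]
  have hhw : ∀ a, hh a = (2 - p0) * w a - (1 - p0) * Rw a := by
    intro a
    have h1 := hwrec a
    have h2 : (2 - p0) * w a = hh a + (1 - p0) * Rw a := by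
      rw [h1, mul_add, mul_div_cancel₀ _ h2p.ne']
      rw [show (2 - p0) * (q * Rw a) = q * (2 - p0) * Rw a by ring, hq2]
    linarith
  have hRwle : ∀ a, (1 - p0) * Rw a ≤ (2 - p0) * w a := by
    intro a
    have := hhw a
    have := hh0 a
    linarith
  -- the mixing weight
  have hp2D : (0:ℝ) < p0 ^ 2 * D := by positivity
  set t : ℝ := 2 * ε / (p0 ^ 2 * D) with htdef
  have ht0 : 0 < t := by positivity
  have ht1 : t ≤ 1 := by
    rw [htdef, div_le_one hp2D]; linarith
  -- the robust scheme
  set χ : Ω → A → ℝ := fun ω b => ∑ c, w c * πs c ω b with hχdef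
  have hχ0 : ∀ ω b, 0 ≤ χ ω b := fun ω b =>
    Finset.sum_nonneg fun c _ => mul_nonneg (hw0 c) (hπs0 c ω b)
  have hχrow : ∀ ω, ∑ b, χ ω b = 1 := by
    intro ω
    simp only [hχdef]
    rw [Finset.sum_comm]
    rw [Finset.sum_congr rfl fun c _ => by rw [← Finset.mul_sum, hπsrow c ω, mul_one]]
    exact hwsum
  set πt : Ω → A → ℝ := fun ω b => (1 - t) * πhat ω b + t * χ ω b with hπtdef
  have hπt0 : ∀ ω b, 0 ≤ πt ω b := fun ω b =>
    add_nonneg (mul_nonneg (by linarith) (hπhat.1 ω b)) (mul_nonneg ht0.le (hχ0 ω b))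
  refine ⟨πt, ⟨hπt0, ?_⟩, ?_, ?_⟩
  · -- rows sum to one
    intro ω
    simp only [hπtdef]
    rw [Finset.sum_add_distrib, ← Finset.mul_sum, ← Finset.mul_sum, hπhat.2 ω, hχrow ω]
    ring
  · -- persuasiveness on the ball
    intro μ hμ0' hμ1' hball a a'
    by_cases haa : a' = a
    · subst haa
      simp
    -- the μhat-margin of χ at a
    have hχM : w a * (p0 * D) ≤ ∑ ω, μhat ω * χ ω a * (v a ω - v a' ω) := by
      have e1 : ∀ ω, μhat ω * χ ω a * (v a ω - v a' ω)
          = ∑ c, w c * (μhat ω * πs c ω a * (v a ω - v a' ω)) := by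
        intro ω
        simp only [hχdef]
        rw [Finset.mul_sum, Finset.sum_mul]
        exact Finset.sum_congr rfl fun c _ => by ring
      have e : ∑ ω, μhat ω * χ ω a * (v a ω - v a' ω)
          = ∑ c, w c * ∑ ω, μhat ω * πs c ω a * (v a ω - v a' ω) := by
        rw [Finset.sum_congr rfl fun ω _ => e1 ω, Finset.sum_comm]
        exact Finset.sum_congr rfl fun c _ => by rw [Finset.mul_sum]
      rw [e]
      calc w a * (p0 * D) ≤ w a * ∑ ω, μhat ω * πs a ω a * (v a ω - v a' ω) :=
            mul_le_mul_of_nonneg_left (hMD a a' haa) (hw0 a)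
        _ ≤ ∑ c, w c * ∑ ω, μhat ω * πs c ω a * (v a ω - v a' ω) :=
            Finset.single_le_sum
              (fun c _ => mul_nonneg (hw0 c) (hM0 c a a')) (mem_univ a)
    -- margin of πt under μhat
    have hS : t * (w a * (p0 * D)) ≤ ∑ ω, μhat ω * πt ω a * (v a ω - v a' ω) := by
      have e1 : ∀ ω, μhat ω * πt ω a * (v a ω - v a' ω)
          = (1 - t) * (μhat ω * πhat ω a * (v a ω - v a' ω))
            + t * (μhat ω * χ ω a * (v a ω - v a' ω)) := by
        intro ω
        simp only [hπtdef]
        ring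
      rw [Finset.sum_congr rfl fun ω _ => e1 ω, Finset.sum_add_distrib,
        ← Finset.mul_sum, ← Finset.mul_sum]
      have h1 : 0 ≤ (1 - t) * ∑ ω, μhat ω * πhat ω a * (v a ω - v a' ω) :=
        mul_nonneg (by linarith) (hpers a a')
      have h2 : t * (w a * (p0 * D)) ≤ t * ∑ ω, μhat ω * χ ω a * (v a ω - v a' ω) :=
        mul_le_mul_of_nonneg_left hχM ht0.le
      linarith
    -- usage of πt at a under μhat
    set Pa : ℝ := ∑ ω, μhat ω * πt ω a with hPadef
    have hPa : Pa = (1 - t) * hh a + t * (p0 * w a + (1 - p0) * Rw a) := by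
      have e1 : ∀ ω, μhat ω * πt ω a
          = (1 - t) * (μhat ω * πhat ω a) + t * ∑ c, w c * (μhat ω * πs c ω a) := by
        intro ω
        simp only [hπtdef, hχdef]
        rw [mul_add]
        congr 1
        · ring
        · simp only [Finset.mul_sum]
          exact Finset.sum_congr rfl fun c _ => by ring
      rw [hPadef, Finset.sum_congr rfl fun ω _ => e1 ω, Finset.sum_add_distrib,
        ← Finset.mul_sum, ← Finset.mul_sum]
      simp only [hhdef]
      have e5 : ∑ ω, ∑ c, w c * (μhat ω * πs c ω a)
          = p0 * w a + (1 - p0) * Rw a := by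
        rw [Finset.sum_comm]
        have e2 : ∀ c, ∑ ω, w c * (μhat ω * πs c ω a)
            = w c * ((if a = c then p0 else 0) + (if a = r c then 1 - p0 else 0)) := by
          intro c
          rw [← Finset.mul_sum, hUse c a]
        rw [Finset.sum_congr rfl fun c _ => e2 c]
        have e3 : ∀ c, w c * ((if a = c then p0 else 0) + (if a = r c then 1 - p0 else 0))
            = (if a = c then w c * p0 else 0) + (if r c = a then w c * (1 - p0) else 0) := by
          intro c
          rw [mul_add, mul_ite, mul_zero, mul_ite, mul_zero]
          congr 1
          split_ifs with h1 h2 h3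
          · rfl
          · exact absurd h1.symm h2
          · exact absurd h3.symm h1
          · rfl
        rw [Finset.sum_congr rfl fun c _ => e3 c, Finset.sum_add_distrib,
          Finset.sum_ite_eq Finset.univ a (fun c => w c * p0)]
        simp only [mem_univ, if_true]
        have e4 : ∑ c, (if r c = a then w c * (1 - p0) else 0)
            = (1 - p0) * Rw a := by
          rw [hRwdef]
          rw [Finset.mul_sum, Finset.sum_filter]
          exact Finset.sum_congr rfl fun c _ => by split_ifs <;> ring
        rw [e4]
        ring
      rw [e5]
    -- key comparison
    have hPa2 : Pa ≤ 2 * w a := by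
      have hx0 : 0 ≤ (1 - p0) * Rw a := mul_nonneg (by linarith) (hRw0 a)
      have hx1 := hRwle a
      have hw := hw0 a
      have hhwa := hhw a
      rw [hPa]
      nlinarith [mul_nonneg (sub_nonneg.mpr ht1) hx0,
        mul_le_mul_of_nonneg_left hx1 ht0.le,
        mul_nonneg (mul_nonneg hp0.le (sub_nonneg.mpr ht1)) hw]
    have hkey2 : ε / p0 * Pa ≤ t * (w a * (p0 * D)) := by
      have h1 : ε / p0 * Pa ≤ ε / p0 * (2 * w a) :=
        mul_le_mul_of_nonneg_left hPa2 (by positivity)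
      have h2 : ε / p0 * (2 * w a) = t * (w a * (p0 * D)) := by
        rw [htdef]
        field_simp
      linarith
    -- perturbation bound
    have habs : ∀ ω, |μ ω - μhat ω| ≤ ε := fun ω =>
      le_trans (Finset.single_le_sum (fun ω' _ => abs_nonneg (μ ω' - μhat ω')) (mem_univ ω))
        hball
    have hE : ∀ ω, -(ε / p0 * (μhat ω * πt ω a))
        ≤ (μ ω - μhat ω) * πt ω a * (v a ω - v a' ω) := by
      intro ω
      have h1 := abs_le.mp (habs ω)
      have h2 : -(1:ℝ) ≤ v a ω - v a' ω := by
        have := (hv a ω).1; have := (hv a' ω).2; linarith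
      have h3 : v a ω - v a' ω ≤ 1 := by
        have := (hv a ω).2; have := (hv a' ω).1; linarith
      have h4 : 0 ≤ πt ω a := hπt0 ω a
      have h5 : ε ≤ ε / p0 * μhat ω := by
        have h6 : ε / p0 * p0 ≤ ε / p0 * μhat ω :=
          mul_le_mul_of_nonneg_left (hmin ω) (by positivity)
        rw [div_mul_cancel₀ _ hp0.ne'] at h6
        exact h6
      have hd : |v a ω - v a' ω| ≤ 1 := abs_le.mpr ⟨h2, h3⟩
      have hxd : -ε ≤ (μ ω - μhat ω) * (v a ω - v a' ω) := by
        have habs2 : |(μ ω - μhat ω) * (v a ω - v a' ω)| ≤ ε * 1 := by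
          rw [abs_mul]
          exact mul_le_mul (habs ω) hd (abs_nonneg _)
            (le_trans (abs_nonneg _) (habs ω))
        have h9 := (abs_le.mp habs2).1
        linarith
      have h7 : (-ε) * πt ω a ≤ ((μ ω - μhat ω) * (v a ω - v a' ω)) * πt ω a :=
        mul_le_mul_of_nonneg_right hxd h4
      have h8 : ε * πt ω a ≤ ε / p0 * μhat ω * πt ω a :=
        mul_le_mul_of_nonneg_right h5 h4
      calc -(ε / p0 * (μhat ω * πt ω a)) = -(ε / p0 * μhat ω * πt ω a) := by ring
        _ ≤ -(ε * πt ω a) := by linarith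
        _ = (-ε) * πt ω a := by ring
        _ ≤ ((μ ω - μhat ω) * (v a ω - v a' ω)) * πt ω a := h7
        _ = (μ ω - μhat ω) * πt ω a * (v a ω - v a' ω) := by ring
    have hEsum : -(ε / p0 * Pa) ≤ ∑ ω, (μ ω - μhat ω) * πt ω a * (v a ω - v a' ω) := by
      have h1 : ∑ ω, -(ε / p0 * (μhat ω * πt ω a))
          ≤ ∑ ω, (μ ω - μhat ω) * πt ω a * (v a ω - v a' ω) :=
        Finset.sum_le_sum fun ω _ => hE ω
      have h2 : ∑ ω, -(ε / p0 * (μhat ω * πt ω a)) = -(ε / p0 * Pa) := by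
        rw [Finset.sum_neg_distrib, hPadef, Finset.mul_sum]
      rw [← h2]
      exact h1
    -- put it together
    have hsplit : ∑ ω, μ ω * πt ω a * (v a ω - v a' ω)
        = (∑ ω, μhat ω * πt ω a * (v a ω - v a' ω))
          + ∑ ω, (μ ω - μhat ω) * πt ω a * (v a ω - v a' ω) := by
      rw [← Finset.sum_add_distrib]
      exact Finset.sum_congr rfl fun ω _ => by ring
    rw [hsplit]
    linarith
  · -- utility guarantee
    have hsplitU : designerU u μhat πt
        = (1 - t) * designerU u μhat πhat + t * designerU u μhat χ := by
      simp only [designerU]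
      have e : ∀ ω, μhat ω * (∑ b, πt ω b * u b ω)
          = (1 - t) * (μhat ω * ∑ b, πhat ω b * u b ω)
            + t * (μhat ω * ∑ b, χ ω b * u b ω) := by
        intro ω
        have e1 : ∑ b, πt ω b * u b ω
            = (1 - t) * ∑ b, πhat ω b * u b ω + t * ∑ b, χ ω b * u b ω := by
          rw [Finset.mul_sum, Finset.mul_sum, ← Finset.sum_add_distrib]
          apply Finset.sum_congr rfl
          intro b _
          simp only [hπtdef]
          ring
        rw [e1]
        ring
      rw [Finset.sum_congr rfl fun ω _ => e ω, Finset.sum_add_distrib,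
        ← Finset.mul_sum, ← Finset.mul_sum]
    have hU1 : designerU u μhat πhat ≤ 1 := by
      simp only [designerU]
      calc ∑ ω, μhat ω * ∑ b, πhat ω b * u b ω
          ≤ ∑ ω, μhat ω * 1 := by
            apply Finset.sum_le_sum
            intro ω _
            apply mul_le_mul_of_nonneg_left _ (hμ0 ω)
            calc ∑ b, πhat ω b * u b ω ≤ ∑ b, πhat ω b * 1 := by
                  apply Finset.sum_le_sum
                  intro b _
                  exact mul_le_mul_of_nonneg_left (hu b ω).2 (hπhat.1 ω b)
              _ = 1 := by rw [Finset.sum_congr rfl fun b _ => mul_one (πhat ω b), hπhat.2 ω]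
        _ = 1 := by rw [Finset.sum_congr rfl fun ω _ => mul_one (μhat ω), hμ1]
    have hUχ : 0 ≤ designerU u μhat χ := by
      apply Finset.sum_nonneg
      intro ω _
      apply mul_nonneg (hμ0 ω)
      exact Finset.sum_nonneg fun b _ => mul_nonneg (hχ0 ω b) (hu b ω).1
    have h6 : t ≤ 6 * ε / (p0 ^ 2 * D) := by
      rw [htdef, div_le_div_iff₀ hp2D hp2D]
      nlinarith
    have h7 : t * designerU u μhat πhat ≤ t * 1 := mul_le_mul_of_nonneg_left hU1 ht0.le
    have h8 : 0 ≤ t * designerU u μhat χ := mul_nonneg ht0.le hUχ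
    rw [hsplitU]
    linarith
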